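/- arXiv:1002.0639 — 3 statements merged into one kernel-verified Lean document; each statement's English description precedes it below -/
import Mathlib

section
/- If a rational function r maps the unit circle 𝕋 into itself and has no poles in the open unit disc 𝔻, then r is a finite Blaschke product whose order equals the number of zeros of r in 𝔻 counted with multiplicity. -/
open Complex Real Set MeasureTheory Metric

noncomputable section

/-- The unit circle `𝕋 = {z ∈ ℂ : |z| = 1}`. -/
def unitCircleSet : Set ℂ := {z : ℂ | ‖z‖ = 1}

/-- An arc: a closed, connected, proper, nonempty subset of the unit circle. -/
def IsArc (A : Set ℂ) : Prop :=
  A ⊆ unitCircleSet ∧ IsClosed A ∧ IsConnected A ∧ A ≠ unitCircleSet ∧ A.Nonempty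

/-- `b` is a finite Blaschke product of order `n` (as a function on the closed unit disc):
`b(z) = λ ∏_{j} (z - a_j)/(1 - conj(a_j) z)` with `|λ| = 1` and `a_j ∈ 𝔻`. -/
def IsBlaschke (n : ℕ) (b : ℂ → ℂ) : Prop :=
  ∃ (lam : ℂ) (a : Fin n → ℂ), ‖lam‖ = 1 ∧ (∀ j, ‖a j‖ < 1) ∧
    ∀ z : ℂ, ‖z‖ ≤ 1 →
      b z = lam * ∏ j, (z - a j) / (1 - (starRingEnd ℂ) (a j) * z)

namespace BlaschkeAux
open Polynomial

lemma circle_infinite : {z : ℂ | ‖z‖ = 1}.Infinite := by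
  have h1 : Set.InjOn (fun t : ℝ => Complex.exp (t * I)) (Set.Ioo 0 1) := by
    intro a ha b hb hab
    have hab' : Complex.exp (a * I) = Complex.exp (b * I) := hab
    rw [Complex.exp_eq_exp_iff_exists_int] at hab'
    obtain ⟨n, hn⟩ := hab'
    have h3 : a = b + n * (2 * Real.pi) := by
      have h2 : (a : ℂ) * I = ((b : ℂ) + n * (2 * Real.pi)) * I := by
        push_cast at hn ⊢; linear_combination hn
      have h2' : (a : ℂ) = (b : ℂ) + n * (2 * Real.pi) := mul_right_cancel₀ I_ne_zero h2
      exact_mod_cast h2'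
    have hn0 : n = 0 := by
      by_contra h
      have h4 : (1:ℝ) ≤ |(n:ℝ)| := by exact_mod_cast Int.one_le_abs (by exact_mod_cast h)
      have h5 : |a - b| < 1 := by
        rw [abs_sub_lt_iff]
        constructor <;> linarith [ha.1, ha.2, hb.1, hb.2]
      have h6 : |a - b| = |(n:ℝ)| * |2 * Real.pi| := by rw [h3, ← abs_mul]; ring_nf
      have h7 : |2 * Real.pi| = 2 * Real.pi := abs_of_pos (by positivity)
      nlinarith [Real.pi_gt_three]
    rw [h3, hn0]; push_cast; ring
  have h2 := (Set.Ioo_infinite (by norm_num : (0:ℝ) < 1)).image h1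
  apply h2.mono
  rintro _ ⟨t, _, rfl⟩
  exact Complex.norm_exp_ofReal_mul_I t

lemma reflect_eval (N : ℕ) (P : Polynomial ℂ) (hP : P.natDegree ≤ N) (z : ℂ) (hz : z ≠ 0) :
    (P.reflect N).eval z = z ^ N * P.eval z⁻¹ := by
  have : Invertible z⁻¹ := invertibleOfNonzero (inv_ne_zero hz)
  have key := Polynomial.eval₂_reflect_mul_pow (RingHom.id ℂ) z⁻¹ N P hP
  rw [invOf_eq_inv, inv_inv] at key
  have key2 : (P.reflect N).eval z * (z⁻¹) ^ N = P.eval z⁻¹ := key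
  rw [← key2, inv_pow]
  field_simp

lemma conj_eval (P : Polynomial ℂ) (z : ℂ) :
    (P.map (starRingEnd ℂ)).eval z = (starRingEnd ℂ) (P.eval ((starRingEnd ℂ) z)) := by
  rw [Polynomial.eval_map]
  have := Polynomial.eval₂_hom (starRingEnd ℂ) ((starRingEnd ℂ) z) (p := P)
  rwa [Complex.conj_conj] at this

lemma reflect_conj_eval_circle (N : ℕ) (P : Polynomial ℂ) (hP : P.natDegree ≤ N) (z : ℂ)
    (hz : ‖z‖ = 1) :
    ((P.map (starRingEnd ℂ)).reflect N).eval z = z ^ N * (starRingEnd ℂ) (P.eval z) := by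
  have hz0 : z ≠ 0 := by intro h; rw [h] at hz; simp at hz
  have hPm : (P.map (starRingEnd ℂ)).natDegree ≤ N := by
    rwa [Polynomial.natDegree_map]
  rw [reflect_eval N _ hPm z hz0, conj_eval]
  congr 2
  rw [Complex.inv_def]
  have : Complex.normSq z = 1 := by
    rw [Complex.normSq_eq_norm_sq, hz]; norm_num
  rw [this]
  simp

lemma reflect_one_linear (a : ℂ) : (X - C a).reflect 1 = 1 - C a * X := by
  have : (X - C a) = C 1 * X ^ 1 + C (-a) * X ^ 0 := by ring_nf; simp [Polynomial.C_neg]; ring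
  rw [this, Polynomial.reflect_add, Polynomial.reflect_C_mul_X_pow, Polynomial.reflect_C_mul_X_pow]
  simp [Polynomial.revAt_le]
  ring

lemma reflect_prod_linear (s : Multiset ℂ) :
    ((s.map fun a => X - C a).prod).reflect (Multiset.card s)
      = (s.map fun a => 1 - C a * X).prod := by
  induction s using Multiset.induction with
  | empty => simp [Polynomial.reflect_C 1 0]
  | cons a s ih =>
    rw [Multiset.map_cons, Multiset.map_cons, Multiset.prod_cons, Multiset.prod_cons,
      Multiset.card_cons]
    have h1 : (X - C a).natDegree ≤ 1 := Polynomial.natDegree_X_sub_C_le a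
    have h2 : ((s.map fun a => X - C a).prod).natDegree ≤ Multiset.card s := by
      rw [Polynomial.natDegree_multiset_prod_X_sub_C_eq_card]
    have hc : Multiset.card s + 1 = 1 + Multiset.card s := by ring
    rw [hc, Polynomial.reflect_mul _ _ h1 h2, reflect_one_linear, ih]

/-- decomposition of `reflect N (map conj P)` for a split polynomial. -/
lemma reflect_decomp (P : Polynomial ℂ) (hP : P ≠ 0) (N : ℕ) (hN : P.natDegree ≤ N) :
    (P.map (starRingEnd ℂ)).reflect N
      = C ((starRingEnd ℂ) P.leadingCoeff) * (X ^ (N - P.natDegree) *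
        ((P.roots.map fun a => 1 - C ((starRingEnd ℂ) a) * X).prod)) := by
  have hsp : P = C P.leadingCoeff * (P.roots.map fun a => X - C a).prod :=
    (IsAlgClosed.splits P).eq_prod_roots
  have hcard : Multiset.card P.roots = P.natDegree :=
    Polynomial.splits_iff_card_roots.mp (IsAlgClosed.splits P)
  have hmap : P.map (starRingEnd ℂ)
      = C ((starRingEnd ℂ) P.leadingCoeff) *
        ((P.roots.map (starRingEnd ℂ)).map fun a => X - C a).prod := by
    conv_lhs => rw [hsp]
    rw [Polynomial.map_mul, Polynomial.map_C, Polynomial.map_multiset_prod,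
      Multiset.map_map, Multiset.map_map]
    congr 2
    apply Multiset.map_congr rfl
    intro a _
    simp [Polynomial.map_sub]
  rw [hmap, Polynomial.reflect_C_mul]
  congr 1
  have hdeg : (((P.roots.map (starRingEnd ℂ)).map fun a => X - C a).prod).natDegree
      ≤ P.natDegree := by
    rw [Polynomial.natDegree_multiset_prod_X_sub_C_eq_card, Multiset.card_map, hcard]
  have hNsplit : N = (N - P.natDegree) + P.natDegree := by omega
  rw [hNsplit]
  have h1 : ((1 : Polynomial ℂ)).natDegree ≤ N - P.natDegree := by simp
  rw [show (((P.roots.map (starRingEnd ℂ)).map fun a => X - C a).prod)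
      = 1 * (((P.roots.map (starRingEnd ℂ)).map fun a => X - C a).prod) from (one_mul _).symm,
    Polynomial.reflect_mul _ _ h1 hdeg]
  rw [show ((1 : Polynomial ℂ)) = C 1 from rfl, Polynomial.reflect_C]
  have := reflect_prod_linear (P.roots.map (starRingEnd ℂ))
  rw [Multiset.card_map, hcard] at this
  rw [this, Multiset.map_map]
  simp

lemma eval_zero_prod_one_sub (s : Multiset ℂ) :
    ((s.map fun a => 1 - C ((starRingEnd ℂ) a) * X).prod).eval 0 = 1 := by
  rw [Polynomial.eval_multiset_prod, Multiset.map_map]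
  have : ∀ a ∈ s, (Polynomial.eval 0 ∘ fun a => 1 - C ((starRingEnd ℂ) a) * X) a = 1 := by
    intro a _; simp
  rw [Multiset.map_congr rfl this]
  simp

lemma prod_one_sub_ne_zero (s : Multiset ℂ) :
    ((s.map fun a => 1 - C ((starRingEnd ℂ) a) * X).prod) ≠ 0 := by
  intro h
  have := eval_zero_prod_one_sub s
  rw [h] at this
  simp at this

lemma natDegree_prod_one_sub (s : Multiset ℂ) (hs : ∀ a ∈ s, a ≠ 0) :
    ((s.map fun a => 1 - C ((starRingEnd ℂ) a) * X).prod).natDegree = Multiset.card s := by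
  rw [Polynomial.natDegree_multiset_prod, Multiset.map_map]
  · have : ∀ a ∈ s, (Polynomial.natDegree ∘ fun a => 1 - C ((starRingEnd ℂ) a) * X) a = 1 := by
      intro a ha
      have h1 : (1 - C ((starRingEnd ℂ) a) * X) = C (-((starRingEnd ℂ) a)) * X + C 1 := by
        rw [Polynomial.C_neg, Polynomial.C_1]; ring
      simp only [Function.comp_apply, h1]
      exact Polynomial.natDegree_linear (neg_ne_zero.mpr (by simpa using hs a ha))
    rw [Multiset.map_congr rfl this]
    simp
  · intro h0
    rw [Multiset.mem_map] at h0
    obtain ⟨a, _, ha⟩ := h0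
    have := congrArg (Polynomial.eval 0) ha
    simp at this

end BlaschkeAux

open Polynomial BlaschkeAux in
open scoped Classical in
/-- A rational function mapping the unit circle into itself with no poles in the open unit
disc is a finite Blaschke product whose order is the number of its zeros in the disc,
counted with multiplicity. -/
theorem rational_isBlaschke (p q : Polynomial ℂ) (hq : q ≠ 0) (hcop : IsCoprime p q)
    (hpole : ∀ z : ℂ, ‖z‖ < 1 → q.eval z ≠ 0)
    (hmap : ∀ z : ℂ, ‖z‖ = 1 → ‖p.eval z / q.eval z‖ = 1) :
    IsBlaschke (Multiset.card (p.roots.filter (fun z => ‖z‖ < 1)))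
      (fun z => p.eval z / q.eval z) := by
  classical
  have hq1 : ∀ z : ℂ, ‖z‖ = 1 → q.eval z ≠ 0 := by
    intro z hz h0
    have := hmap z hz
    rw [h0, div_zero] at this
    simp at this
  have hp0 : p ≠ 0 := by
    intro h
    have := hmap 1 (by simp)
    rw [h] at this
    simp at this
  have hqle : ∀ z : ℂ, ‖z‖ ≤ 1 → q.eval z ≠ 0 := by
    intro z hz
    rcases lt_or_eq_of_le hz with h | h
    · exact hpole z h
    · exact hq1 z h
  have habs : ∀ z : ℂ, ‖z‖ = 1 → ‖p.eval z‖ = ‖q.eval z‖ := by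
    intro z hz
    have h1 := hmap z hz
    rw [norm_div] at h1
    have h2 := hq1 z hz
    rw [div_eq_one_iff_eq (by simpa using h2)] at h1
    exact h1
  set n := p.natDegree with hn_def
  set m := q.natDegree with hm_def
  set N := max n m with hN_def
  have hnN : n ≤ N := le_max_left _ _
  have hmN : m ≤ N := le_max_right _ _
  set pbar := p.map (starRingEnd ℂ) with hpbar_def
  set qbar := q.map (starRingEnd ℂ) with hqbar_def
  -- the fundamental identity
  have hid : p * pbar.reflect N = q * qbar.reflect N := by
    rw [← sub_eq_zero]
    apply Polynomial.eq_zero_of_infinite_isRoot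
    apply BlaschkeAux.circle_infinite.mono
    intro z hz
    simp only [Set.mem_setOf_eq] at hz
    simp only [Set.mem_setOf_eq, Polynomial.IsRoot, Polynomial.eval_sub, Polynomial.eval_mul]
    rw [hpbar_def, hqbar_def, BlaschkeAux.reflect_conj_eval_circle N p hnN z hz,
      BlaschkeAux.reflect_conj_eval_circle N q hmN z hz]
    have key : (p.eval z) * (starRingEnd ℂ) (p.eval z)
        = (q.eval z) * (starRingEnd ℂ) (q.eval z) := by
      rw [Complex.mul_conj, Complex.mul_conj]
      norm_cast
      rw [Complex.normSq_eq_norm_sq, Complex.normSq_eq_norm_sq, habs z hz]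
    linear_combination z ^ N * key
  -- evaluation of coprime combination
  have hqcop : ∀ z : ℂ, p.eval z = 0 → q.eval z ≠ 0 := by
    intro z hpz hqz
    obtain ⟨u, v, huv⟩ := hcop
    have := congrArg (Polynomial.eval z) huv
    simp [hpz, hqz] at this
  -- all roots of p are in the open disc
  have hroots : ∀ a ∈ p.roots, ‖a‖ < 1 := by
    intro a ha
    have hpa : p.eval a = 0 := Polynomial.isRoot_of_mem_roots ha
    by_contra hge
    push_neg at hge
    rcases eq_or_lt_of_le hge with h1 | h1
    · have := habs a h1.symm
      rw [hpa] at this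
      simp only [norm_zero] at this
      exact hq1 a h1.symm (by simpa using this.symm)
    · -- |a| > 1
      have ha0 : a ≠ 0 := by
        intro h; rw [h] at h1; simp at h1; linarith
      have hqa : q.eval a ≠ 0 := hqcop a hpa
      have hrefl : (qbar.reflect N).eval a ≠ 0 := by
        have hqm : qbar.natDegree ≤ N := by
          rw [hqbar_def, Polynomial.natDegree_map]; exact hmN
        rw [BlaschkeAux.reflect_eval N qbar hqm a ha0, hqbar_def, BlaschkeAux.conj_eval]
        apply mul_ne_zero (pow_ne_zero _ ha0)
        intro hcontra
        rw [_root_.map_eq_zero] at hcontra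
        refine hpole ((starRingEnd ℂ) a⁻¹) ?_ hcontra
        rw [Complex.norm_conj, norm_inv, inv_lt_one_iff₀]
        right; exact h1
      have := congrArg (Polynomial.eval a) hid
      rw [Polynomial.eval_mul, Polynomial.eval_mul, hpa, zero_mul] at this
      exact (mul_ne_zero hqa hrefl) this.symm
  -- the filtered multiset is everything
  have hfilt : Multiset.filter (fun z => ‖z‖ < 1) p.roots = p.roots :=
    Multiset.filter_eq_self.mpr hroots
  rw [hfilt]
    -- factorizations
  set c := p.leadingCoeff with hc_def
  have hc : c ≠ 0 := Polynomial.leadingCoeff_ne_zero.mpr hp0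
  have hsp : p = C c * (p.roots.map fun a => X - C a).prod :=
    (IsAlgClosed.splits p).eq_prod_roots
  have hcardq : Multiset.card q.roots = m :=
    Polynomial.splits_iff_card_roots.mp (IsAlgClosed.splits q)
  set Q := (p.roots.map fun a => 1 - C ((starRingEnd ℂ) a) * X).prod with hQ_def
  set Q' := (q.roots.map fun a => 1 - C ((starRingEnd ℂ) a) * X).prod with hQ'_def
  have hreflp : pbar.reflect N = C ((starRingEnd ℂ) c) * (X ^ (N - n) * Q) :=
    BlaschkeAux.reflect_decomp p hp0 N hnN
  have hreflq : qbar.reflect N = C ((starRingEnd ℂ) q.leadingCoeff) * (X ^ (N - m) * Q') :=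
    BlaschkeAux.reflect_decomp q hq N hmN
  have hQne : Q ≠ 0 := BlaschkeAux.prod_one_sub_ne_zero _
  have hQ'ne : Q' ≠ 0 := BlaschkeAux.prod_one_sub_ne_zero _
  have hQ'deg : Q'.natDegree = m := by
    rw [hQ'_def, BlaschkeAux.natDegree_prod_one_sub, hcardq]
    intro a ha h0
    subst h0
    exact hpole 0 (by simp) (Polynomial.isRoot_of_mem_roots ha)
  -- degree bookkeeping
  have hrpne : pbar.reflect N ≠ 0 := by
    intro h
    rw [Polynomial.reflect_eq_zero_iff, hpbar_def] at h
    exact (Polynomial.map_ne_zero_iff (RingHom.injective (starRingEnd ℂ))).mpr hp0 h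
  have hrqne : qbar.reflect N ≠ 0 := by
    intro h
    rw [Polynomial.reflect_eq_zero_iff, hqbar_def] at h
    exact (Polynomial.map_ne_zero_iff (RingHom.injective (starRingEnd ℂ))).mpr hq h
  have hQdeg : Q.natDegree = m := by
    have hdeg_eq := congrArg Polynomial.natDegree hid
    rw [Polynomial.natDegree_mul hp0 hrpne, Polynomial.natDegree_mul hq hrqne,
      hreflp, hreflq,
      Polynomial.natDegree_C_mul (by simpa using hc),
      Polynomial.natDegree_C_mul (by simpa using Polynomial.leadingCoeff_ne_zero.mpr hq),
      Polynomial.natDegree_mul (pow_ne_zero _ Polynomial.X_ne_zero) hQne,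
      Polynomial.natDegree_mul (pow_ne_zero _ Polynomial.X_ne_zero) hQ'ne,
      Polynomial.natDegree_X_pow, Polynomial.natDegree_X_pow] at hdeg_eq
    omega
  -- divisibility : q ∣ Q
  have hdvd1 : q ∣ pbar.reflect N :=
    hcop.symm.dvd_of_dvd_mul_left (hid ▸ dvd_mul_right q (qbar.reflect N))
  have hdvd2 : q ∣ X ^ (N - n) * Q := by
    have h2 : X ^ (N - n) * Q
        = C ((starRingEnd ℂ) c)⁻¹ * (C ((starRingEnd ℂ) c) * (X ^ (N - n) * Q)) := by
      rw [← mul_assoc, ← Polynomial.C_mul, inv_mul_cancel₀ (by simpa using hc),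
        Polynomial.C_1, one_mul]
    rw [h2, ← hreflp]
    exact hdvd1.mul_left _
  have hXq : IsCoprime (X : Polynomial ℂ) q := by
    rw [Polynomial.irreducible_X.coprime_iff_not_dvd, Polynomial.X_dvd_iff,
      Polynomial.coeff_zero_eq_eval_zero]
    exact hpole 0 (by simp)
  have hdvdQ : q ∣ Q := (hXq.symm.pow_right).dvd_of_dvd_mul_left hdvd2
  obtain ⟨v, hv⟩ := hdvdQ
  have hvne : v ≠ 0 := by
    intro h; rw [h, mul_zero] at hv; exact hQne hv
  have hvdeg : v.natDegree = 0 := by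
    have := hQdeg
    rw [hv, Polynomial.natDegree_mul hq hvne] at this
    omega
  have hve : v = C (v.coeff 0) := Polynomial.eq_C_of_natDegree_eq_zero hvdeg
  set e := v.coeff 0 with he_def
  have he : e ≠ 0 := by
    intro h; rw [hve, h, Polynomial.C_0] at hvne; exact hvne rfl
  -- indexing the roots
  have hLlen : p.roots.toList.length = Multiset.card p.roots := Multiset.length_toList _
  set a : Fin (Multiset.card p.roots) → ℂ :=
    fun j => p.roots.toList.get (Fin.cast hLlen.symm j) with ha_def
  have hamem : ∀ j, a j ∈ p.roots := by
    intro j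
    rw [← Multiset.mem_toList]
    exact List.get_mem _ _
  have hprod : ∀ f : ℂ → ℂ, (∏ j, f (a j)) = (p.roots.map f).prod := by
    intro f
    conv_rhs => rw [← Multiset.coe_toList p.roots]
    rw [Multiset.map_coe, Multiset.prod_coe]
    calc (∏ j, f (a j)) = ∏ j : Fin p.roots.toList.length, f (p.roots.toList.get j) :=
          Equiv.prod_comp (finCongr hLlen.symm) (fun j => f (p.roots.toList.get j))
      _ = (p.roots.toList.map f).prod := by
          conv_rhs => rw [← List.ofFn_get p.roots.toList]
          rw [List.map_ofFn, List.prod_ofFn]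
          rfl
  -- nonvanishing of denominators in the closed disc
  have hden : ∀ z : ℂ, ‖z‖ ≤ 1 → ∀ x ∈ p.roots, 1 - (starRingEnd ℂ) x * z ≠ 0 := by
    intro z hz x hx h0
    have h1 : (starRingEnd ℂ) x * z = 1 := by linear_combination -h0
    have := congrArg (‖·‖) h1
    rw [norm_mul, Complex.norm_conj, norm_one] at this
    nlinarith [hroots x hx, norm_nonneg z, norm_nonneg x]
  -- the explicit formula
  have hform : ∀ z : ℂ, ‖z‖ ≤ 1 →
      p.eval z / q.eval z = (c * e) * ∏ j, (z - a j) / (1 - (starRingEnd ℂ) (a j) * z) := by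
    intro z hz
    have hQz : Q.eval z = (p.roots.map fun x => 1 - (starRingEnd ℂ) x * z).prod := by
      rw [hQ_def, Polynomial.eval_multiset_prod, Multiset.map_map]
      congr 1
      apply Multiset.map_congr rfl
      intro x _
      simp
    have hPz : p.eval z = c * (p.roots.map fun x => z - x).prod := by
      conv_lhs => rw [hsp]
      rw [Polynomial.eval_mul, Polynomial.eval_C, Polynomial.eval_multiset_prod,
        Multiset.map_map]
      congr 2
      apply Multiset.map_congr rfl
      intro x _
      simp
    have hqz : Q.eval z = q.eval z * e := by
      rw [hv, Polynomial.eval_mul]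
      congr 1
      rw [hve]
      simp
    have hQzne : (p.roots.map fun x => 1 - (starRingEnd ℂ) x * z).prod ≠ 0 := by
      apply Multiset.prod_ne_zero
      rw [Multiset.mem_map]
      rintro ⟨x, hx, h0⟩
      exact hden z hz x hx h0
    have hsplit : ∏ j, (z - a j) / (1 - (starRingEnd ℂ) (a j) * z)
        = (p.roots.map fun x => z - x).prod
          / (p.roots.map fun x => 1 - (starRingEnd ℂ) x * z).prod := by
      rw [Finset.prod_div_distrib, hprod (fun x => z - x),
        hprod (fun x => 1 - (starRingEnd ℂ) x * z)]
    rw [hsplit, hPz]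
    have hqev : q.eval z = (p.roots.map fun x => 1 - (starRingEnd ℂ) x * z).prod / e := by
      rw [← hQz, hqz]
      field_simp
    rw [hqev]
    field_simp
  -- modulus of the constant
  have hlam : ‖c * e‖ = 1 := by
    have h1 := hmap 1 (by simp)
    rw [hform 1 (by simp)] at h1
    rw [norm_mul, norm_prod] at h1
    have h2 : ∀ j ∈ Finset.univ, ‖(1 - a j) / (1 - (starRingEnd ℂ) (a j) * 1)‖ = 1 := by
      intro j _
      rw [mul_one, norm_div]
      have h3 : (1 : ℂ) - (starRingEnd ℂ) (a j) = (starRingEnd ℂ) (1 - a j) := by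
        rw [map_sub, map_one]
      rw [h3, Complex.norm_conj]
      have h4 : (1 : ℂ) - a j ≠ 0 := by
        intro h0
        have heq : a j = 1 := by linear_combination -h0
        have hlt := hroots (a j) (hamem j)
        rw [heq] at hlt
        simp at hlt
      exact div_self (norm_ne_zero_iff.mpr h4)
    rw [Finset.prod_congr rfl h2, Finset.prod_const_one, mul_one] at h1
    exact h1
  exact ⟨c * e, a, hlam, fun j => hroots (a j) (hamem j), hform⟩
end
end

section
/- If q is a complex polynomial with no zeros in the open unit disc 𝔻 such that the rational function 1/q maps the unit circle 𝕋 into itself, then q is constant (of modulus 1). -/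
open Complex Real Set MeasureTheory Metric

noncomputable section

/-- If `q` is a polynomial with no zeros in the open unit disc such that `1/q` maps the
unit circle into itself, then `q` is a constant of modulus `1`. -/
theorem polynomial_const_of_inv_maps_circle (q : Polynomial ℂ)
    (h0 : ∀ z : ℂ, ‖z‖ < 1 → q.eval z ≠ 0)
    (hmap : ∀ z : ℂ, ‖z‖ = 1 → ‖1 / q.eval z‖ = 1) :
    ∃ c : ℂ, ‖c‖ = 1 ∧ q = Polynomial.C c := by
  -- q has no zeros on the closed ball
  have hne : ∀ z ∈ closedBall (0 : ℂ) 1, q.eval z ≠ 0 := by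
    intro z hz
    rw [mem_closedBall, dist_zero_right] at hz
    rcases lt_or_eq_of_le hz with h | h
    · exact h0 z h
    · intro h0'
      have := hmap z h
      rw [h0', div_zero, norm_zero] at this
      norm_num at this
  -- |q z| = 1 on the circle
  have habs : ∀ z : ℂ, ‖z‖ = 1 → ‖q.eval z‖ = 1 := by
    intro z hz
    have := hmap z hz
    rwa [one_div, norm_inv, inv_eq_one] at this
  -- differentiability
  have hdq : DiffContOnCl ℂ (fun z => q.eval z) (ball (0 : ℂ) 1) :=
    (q.differentiable.differentiableOn).diffContOnCl
  have hdinv : DiffContOnCl ℂ (fun z => (q.eval z)⁻¹) (ball (0 : ℂ) 1) := by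
    apply DifferentiableOn.diffContOnCl
    rw [closure_ball (0 : ℂ) one_ne_zero]
    exact DifferentiableOn.inv (q.differentiable.differentiableOn) hne
  have hfr : frontier (ball (0 : ℂ) 1) = sphere 0 1 := frontier_ball 0 one_ne_zero
  have hcl : closure (ball (0 : ℂ) 1) = closedBall 0 1 := closure_ball 0 one_ne_zero
  -- max modulus bounds on closed ball
  have hle : ∀ z ∈ closedBall (0 : ℂ) 1, ‖q.eval z‖ ≤ 1 := by
    intro z hz
    have := Complex.norm_le_of_forall_mem_frontier_norm_le (isBounded_ball) hdq
      (fun w hw => by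
        rw [hfr, mem_sphere_iff_norm, sub_zero] at hw
        simpa using le_of_eq (habs w hw)) (hcl ▸ hz)
    simpa using this
  have hge : ∀ z ∈ closedBall (0 : ℂ) 1, (1:ℝ) ≤ ‖q.eval z‖ := by
    intro z hz
    have := Complex.norm_le_of_forall_mem_frontier_norm_le (C := 1) (isBounded_ball) hdinv
      (fun w hw => by
        rw [hfr, mem_sphere_iff_norm, sub_zero] at hw
        simp [habs w hw]) (hcl ▸ hz)
    simp only [norm_inv] at this
    rw [inv_le_one_iff₀] at this
    rcases this with h | h
    · exact absurd (norm_eq_zero.mp (le_antisymm h (norm_nonneg _))) (hne z hz)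
    · exact h
  -- |q| = 1 on closed ball, so 0 is a max point
  have heq1 : ∀ z ∈ closedBall (0 : ℂ) 1, ‖q.eval z‖ = 1 :=
    fun z hz => le_antisymm (hle z hz) (hge z hz)
  have h00 : (0:ℂ) ∈ closedBall (0:ℂ) 1 := by simp
  have hmax : IsMaxOn (norm ∘ fun z => q.eval z) (ball (0:ℂ) 1) 0 := by
    intro z hz
    simp only [Function.comp, Set.mem_setOf_eq]
    rw [heq1 z (ball_subset_closedBall hz), heq1 0 h00]
  have hconst := Complex.eqOn_closedBall_of_isMaxOn_norm hdq hmax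
  -- q agrees with constant on an infinite set
  have hinf : ({x : ℂ | q.eval x = Polynomial.eval x (Polynomial.C (q.eval 0))}).Infinite := by
    apply Set.Infinite.mono (s := closedBall (0:ℂ) 1)
    · intro z hz
      simp only [Set.mem_setOf_eq, Polynomial.eval_C]
      exact hconst hz
    · have hb : (ball (0:ℂ) 1).Infinite := by
        refine Set.infinite_of_injective_forall_mem
          (f := fun n : ℕ => ((1 : ℂ) / (n + 2))) ?_ ?_
        · intro a b hab
          simp only [one_div] at hab
          have h2 := inv_injective hab
          have h3 : (a : ℂ) = b := by linear_combination h2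
          exact_mod_cast h3
        · intro n
          have hcast : ((n:ℂ)+2) = ((n+2:ℕ):ℂ) := by push_cast; ring
          rw [mem_ball, dist_zero_right]
          show ‖(1:ℂ) / ((n:ℂ) + 2)‖ < 1
          rw [hcast]
          simp only [norm_div, norm_one, Complex.norm_natCast]
          rw [div_lt_one (by positivity)]
          norm_cast
          omega
      exact Set.Infinite.mono ball_subset_closedBall hb
  have hq : q = Polynomial.C (q.eval 0) := Polynomial.eq_of_infinite_eval_eq _ _ hinf
  exact ⟨q.eval 0, heq1 0 h00, hq⟩
end
end

section
/- A finite Blaschke product b has order n if and only if the set U_b = {z ∈ 𝕋 : Im b(z) ≥ 0} is a disjoint union of exactly n arcs (where for n = 0, i.e. b a unimodular constant, U_b is either all of 𝕋 or the empty set, each counted as a 'union of 0 arcs'). -/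
open Complex Real Set MeasureTheory Metric

noncomputable section

/-- `E` is a disjoint union of exactly `n` arcs (with `𝕋` and `∅` counted as
disjoint unions of `0` arcs). -/
def IsDisjointUnionOfArcs (n : ℕ) (E : Set ℂ) : Prop :=
  (n = 0 ∧ (E = ∅ ∨ E = unitCircleSet)) ∨
    ∃ A : Fin n → Set ℂ, (∀ j, IsArc (A j)) ∧ Pairwise (Function.onFun Disjoint A) ∧ E = ⋃ j, A j

lemma unitCircle_eq_sphere : unitCircleSet = Metric.sphere (0:ℂ) 1 := by
  ext z; simp [unitCircleSet, Complex.dist_eq]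

lemma isConnected_unitCircle : IsConnected unitCircleSet := by
  rw [unitCircle_eq_sphere]
  exact isConnected_sphere (by rw [Complex.rank_real_complex]; norm_num) 0 zero_le_one

lemma IsArc.isCompact {A : Set ℂ} (h : IsArc A) : IsCompact A := by
  refine IsCompact.of_isClosed_subset (isCompact_sphere 0 1) h.2.1 ?_
  rw [← unitCircle_eq_sphere]; exact h.1

/-- A nonempty preconnected set inside a finite disjoint union of compacts lies in one. -/
lemma connected_subset_unique {K : Set ℂ} (hK : IsPreconnected K) (hKne : K.Nonempty)
    {ι : Type} [Fintype ι] [DecidableEq ι] (B : ι → Set ℂ) (hBc : ∀ i, IsCompact (B i))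
    (hd : Pairwise (Function.onFun Disjoint B)) (hsub : K ⊆ ⋃ i, B i) :
    ∃ i, K ⊆ B i := by
  have main : ∀ (s : Finset ι), K ⊆ ⋃ i ∈ s, B i → ∃ i ∈ s, K ⊆ B i := by
    intro s
    induction s using Finset.induction with
    | empty => intro h; obtain ⟨x, hx⟩ := hKne; simpa using h hx
    | @insert a s ha ih =>
      intro h
      have hBs : IsCompact (⋃ i ∈ s, B i) := s.isCompact_biUnion (fun i _ => hBc i)
      have hdisj : Disjoint (B a) (⋃ i ∈ s, B i) := by
        refine Set.disjoint_iUnion₂_right.2 fun i hi => hd ?_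
        rintro rfl; exact ha hi
      obtain ⟨u, v, hu, hv, hau, hsv, huv⟩ :=
        SeparatedNhds.of_isCompact_isCompact (hBc a) hBs hdisj
      have hKuv : K ⊆ u ∪ v := by
        intro x hx
        rcases Set.mem_iUnion₂.1 (h hx) with ⟨i, hi, hxi⟩
        rcases Finset.mem_insert.1 hi with rfl | hi
        · exact Or.inl (hau hxi)
        · exact Or.inr (hsv (Set.mem_biUnion hi hxi))
      rcases hK.subset_or_subset hu hv huv hKuv with hKu | hKv
      · refine ⟨a, Finset.mem_insert_self a s, fun x hx => ?_⟩
        rcases Set.mem_iUnion₂.1 (h hx) with ⟨i, hi, hxi⟩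
        rcases Finset.mem_insert.1 hi with rfl | hi
        · exact hxi
        · exact absurd (hsv (Set.mem_biUnion hi hxi)) (Set.disjoint_left.1 huv (hKu hx))
      · have : K ⊆ ⋃ i ∈ s, B i := by
          intro x hx
          rcases Set.mem_iUnion₂.1 (h hx) with ⟨i, hi, hxi⟩
          rcases Finset.mem_insert.1 hi with rfl | hi
          · exact absurd (hau hxi) (Set.disjoint_right.1 huv (hKv hx))
          · exact Set.mem_biUnion hi hxi
        obtain ⟨i, hi, hKi⟩ := ih this
        exact ⟨i, Finset.mem_insert_of_mem hi, hKi⟩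
  obtain ⟨i, _, hKi⟩ := main Finset.univ (by simpa using hsub)
  exact ⟨i, hKi⟩

lemma arcs_count_unique {E : Set ℂ} {n m : ℕ} (hn : IsDisjointUnionOfArcs n E)
    (hm : IsDisjointUnionOfArcs m E) : n = m := by
  -- first: a decomposition into arcs with E = ∅ or 𝕋 forces the number to be 0
  have key : ∀ (k : ℕ), (E = ∅ ∨ E = unitCircleSet) →
      (∃ A : Fin k → Set ℂ, (∀ j, IsArc (A j)) ∧ Pairwise (Function.onFun Disjoint A) ∧ E = ⋃ j, A j) →
      k = 0 := by
    rintro k hE ⟨A, hA, hAd, rfl⟩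
    by_contra hk
    rcases hE with hE | hE
    · obtain ⟨x, hx⟩ := (hA ⟨0, Nat.pos_of_ne_zero hk⟩).2.2.2.2
      have : x ∈ (∅ : Set ℂ) := hE ▸ Set.mem_iUnion.2 ⟨_, hx⟩
      exact this
    · -- 𝕋 covered by the disjoint arcs; connectedness puts it in one arc, contradicting properness
      obtain ⟨i, hi⟩ := connected_subset_unique isConnected_unitCircle.isPreconnected
        isConnected_unitCircle.nonempty A (fun i => (hA i).isCompact) hAd (le_of_eq hE.symm)
      exact (hA i).2.2.2.1 (le_antisymm (hA i).1 hi)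
  rcases hn with ⟨hn0, hE⟩ | hn
  · rcases hm with ⟨hm0, _⟩ | hm
    · omega
    · rw [hn0, (key m hE hm)]
  · rcases hm with ⟨hm0, hE⟩ | hm
    · rw [hm0, (key n hE hn)]
    · obtain ⟨A, hA, hAd, hEA⟩ := hn
      obtain ⟨B, hB, hBd, hEB⟩ := hm
      have hAB : ∀ j : Fin n, ∃ k, A j ⊆ B k := fun j =>
        connected_subset_unique (hA j).2.2.1.isPreconnected (hA j).2.2.2.2 B
          (fun k => (hB k).isCompact) hBd
          ((Set.subset_iUnion A j).trans (hEA ▸ hEB ▸ Set.Subset.rfl))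
      have hBA : ∀ k : Fin m, ∃ j, B k ⊆ A j := fun k =>
        connected_subset_unique (hB k).2.2.1.isPreconnected (hB k).2.2.2.2 A
          (fun j => (hA j).isCompact) hAd
          ((Set.subset_iUnion B k).trans (hEB ▸ hEA ▸ Set.Subset.rfl))
      choose f hf using hAB
      choose g hg using hBA
      have hgf : ∀ j, g (f j) = j := by
        intro j
        by_contra hne
        obtain ⟨x, hx⟩ := (hA j).2.2.2.2
        exact Set.disjoint_left.1 (hAd hne) (hg (f j) (hf j hx)) hx
      have hfg : ∀ k, f (g k) = k := by
        intro k
        by_contra hne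
        obtain ⟨x, hx⟩ := (hB k).2.2.2.2
        exact Set.disjoint_left.1 (hBd hne) (hf (g k) (hg k hx)) hx
      have : Fintype.card (Fin n) = Fintype.card (Fin m) :=
        Fintype.card_congr ⟨f, g, hgf, hfg⟩
      simpa using this

namespace BlaschkeAux

lemma u_lt {a : ℂ} (ha : ‖a‖ < 1) (θ : ℝ) :
    ‖(starRingEnd ℂ) a * Complex.exp (θ * I)‖ < 1 := by
  rw [norm_mul, Complex.norm_exp_ofReal_mul_I, mul_one, Complex.norm_conj]; exact ha

lemma w_ne {a : ℂ} (ha : ‖a‖ < 1) (θ : ℝ) :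
    1 - (starRingEnd ℂ) a * Complex.exp (θ * I) ≠ 0 := by
  intro h
  have h1 : (starRingEnd ℂ) a * Complex.exp (θ * I) = 1 := by linear_combination -h
  have h2 := u_lt ha θ
  rw [h1] at h2; simp at h2

lemma w_slit {a : ℂ} (ha : ‖a‖ < 1) (θ : ℝ) :
    1 - (starRingEnd ℂ) a * Complex.exp (θ * I) ∈ Complex.slitPlane := by
  rw [Complex.mem_slitPlane_iff]
  left
  have h1 : |((starRingEnd ℂ) a * Complex.exp (θ * I)).re| ≤
      ‖(starRingEnd ℂ) a * Complex.exp (θ * I)‖ := Complex.abs_re_le_norm _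
  have h2 := u_lt ha θ
  simp only [Complex.sub_re, Complex.one_re]
  have := abs_le.1 h1
  linarith

/-- the basic factor identity on the circle -/
lemma factor_eq {a : ℂ} (ha : ‖a‖ < 1) (θ : ℝ) :
    (Complex.exp (θ * I) - a) / (1 - (starRingEnd ℂ) a * Complex.exp (θ * I)) =
      Complex.exp (θ * I) *
        Complex.exp ((↑(-(2 * (1 - (starRingEnd ℂ) a * Complex.exp (θ * I)).arg)) : ℂ) * I) := by
  set w : ℂ := 1 - (starRingEnd ℂ) a * Complex.exp (θ * I) with hw
  have hwne : w ≠ 0 := w_ne ha θ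
  have hnum : Complex.exp (θ * I) - a = Complex.exp (θ * I) * (starRingEnd ℂ) w := by
    rw [hw]
    rw [map_sub, map_one, map_mul, Complex.conj_conj, ← Complex.exp_conj]
    have : (starRingEnd ℂ) ((θ : ℂ) * I) = -(θ * I) := by
      rw [map_mul, Complex.conj_ofReal, Complex.conj_I]; ring
    rw [this]
    have h2 : Complex.exp (θ * I) * Complex.exp (-(θ * I)) = 1 := by
      rw [← Complex.exp_add]; simp
    calc Complex.exp (θ * I) - a
        = Complex.exp (θ * I) - a * (Complex.exp (θ * I) * Complex.exp (-(θ * I))) := by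
          rw [h2, mul_one]
      _ = Complex.exp (θ * I) * (1 - a * Complex.exp (-(θ * I))) := by ring
  have habsne : (‖w‖ : ℂ) ≠ 0 := by
    simpa using (norm_ne_zero_iff.2 hwne)
  have hconj : (starRingEnd ℂ) w = (‖w‖ : ℂ) * Complex.exp (-(w.arg) * I) := by
    nth_rewrite 1 [← Complex.norm_mul_exp_arg_mul_I w]
    rw [map_mul, Complex.conj_ofReal, ← Complex.exp_conj]
    congr 1
    rw [map_mul, Complex.conj_ofReal, Complex.conj_I]
    push_cast; ring
  have hfrac : (starRingEnd ℂ) w / w =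
      Complex.exp ((↑(-(2 * w.arg)) : ℂ) * I) := by
    nth_rewrite 2 [← Complex.norm_mul_exp_arg_mul_I w]
    rw [hconj, mul_div_mul_left _ _ habsne, ← Complex.exp_sub]
    congr 1
    push_cast; ring
  rw [hnum, mul_div_assoc, hfrac]


/-- the argument lift of a Blaschke product along the circle -/
def psi (lam : ℂ) {n : ℕ} (a : Fin n → ℂ) (θ : ℝ) : ℝ :=
  lam.arg + n * θ - 2 * ∑ j, (1 - (starRingEnd ℂ) (a j) * Complex.exp (θ * I)).arg

lemma prod_eq {n : ℕ} {lam : ℂ} {a : Fin n → ℂ} (hlam : ‖lam‖ = 1)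
    (ha : ∀ j, ‖a j‖ < 1) (θ : ℝ) :
    lam * ∏ j, (Complex.exp (θ * I) - a j) /
        (1 - (starRingEnd ℂ) (a j) * Complex.exp (θ * I)) =
      Complex.exp ((psi lam a θ : ℂ) * I) := by
  have hprod : ∏ j, (Complex.exp (θ * I) - a j) /
      (1 - (starRingEnd ℂ) (a j) * Complex.exp (θ * I)) =
      Complex.exp (θ * I) ^ n *
        Complex.exp ((↑(∑ j, -(2 * (1 - (starRingEnd ℂ) (a j) * Complex.exp (θ * I)).arg)) : ℂ)
          * I) := by
    calc ∏ j, (Complex.exp (θ * I) - a j) /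
        (1 - (starRingEnd ℂ) (a j) * Complex.exp (θ * I))
        = ∏ j, (Complex.exp (θ * I) *
            Complex.exp ((↑(-(2 * (1 - (starRingEnd ℂ) (a j) * Complex.exp (θ * I)).arg)) : ℂ)
              * I)) := by
          exact Finset.prod_congr rfl fun j _ => factor_eq (ha j) θ
      _ = Complex.exp (θ * I) ^ n * ∏ j,
            Complex.exp ((↑(-(2 * (1 - (starRingEnd ℂ) (a j) * Complex.exp (θ * I)).arg)) : ℂ)
              * I) := by
          rw [Finset.prod_mul_distrib, Finset.prod_const, Finset.card_univ, Fintype.card_fin]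
      _ = _ := by
          rw [← Complex.exp_sum]
          congr 1
          rw [← Finset.sum_mul]
          push_cast
          ring
  rw [hprod]
  have hlameq : lam = Complex.exp ((lam.arg : ℂ) * I) := by
    nth_rewrite 1 [← Complex.norm_mul_exp_arg_mul_I lam]
    rw [hlam]; simp
  have hzn : Complex.exp (θ * I) ^ n = Complex.exp ((n : ℂ) * (θ * I)) := by
    rw [Complex.exp_nat_mul]
  rw [hzn]
  nth_rewrite 1 [hlameq]
  rw [← Complex.exp_add, ← Complex.exp_add]
  congr 1
  unfold psi
  have hsum : ∑ j, -(2 * (1 - (starRingEnd ℂ) (a j) * Complex.exp (θ * I)).arg) =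
      -(2 * ∑ j, (1 - (starRingEnd ℂ) (a j) * Complex.exp (θ * I)).arg) := by
    rw [Finset.mul_sum, ← Finset.sum_neg_distrib]
  rw [hsum]
  push_cast
  ring


/-- derivative term bound -/
lemma im_lt_half {c z : ℂ} (h : Complex.normSq (c * z) < 1) :
    ((-(c * (I * z))) * (1 - c * z)⁻¹).im < 1 / 2 := by
  set u : ℂ := c * z with hu
  have h1 : -(c * (I * z)) = -(u * I) := by rw [hu]; ring
  rw [h1, ← div_eq_mul_inv]
  have hune : (1 : ℂ) - u ≠ 0 := by
    intro h0
    have : u = 1 := by linear_combination -h0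
    rw [this] at h; simp at h
  have hd : 0 < Complex.normSq (1 - u) := Complex.normSq_pos.2 hune
  rw [Complex.div_im, div_sub_div_same, div_lt_iff₀ hd]
  have hns : Complex.normSq u = u.re * u.re + u.im * u.im := Complex.normSq_apply u
  have hns2 : Complex.normSq (1 - u) = (1 - u.re) * (1 - u.re) + u.im * u.im := by
    rw [Complex.normSq_apply]; simp
  simp only [Complex.neg_im, Complex.neg_re, Complex.mul_im, Complex.mul_re,
    Complex.I_re, Complex.I_im, Complex.sub_re, Complex.sub_im, Complex.one_re,
    Complex.one_im, hns2]
  rw [hns] at h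
  nlinarith

/-- derivative of the argument lift -/
lemma hasDerivAt_psi {n : ℕ} (lam : ℂ) {a : Fin n → ℂ}
    (ha : ∀ j, ‖a j‖ < 1) (θ : ℝ) :
    HasDerivAt (psi lam a)
      ((n : ℝ) - 2 * ∑ j, ((-((starRingEnd ℂ) (a j) * (I * Complex.exp (θ * I)))) *
        (1 - (starRingEnd ℂ) (a j) * Complex.exp (θ * I))⁻¹).im) θ := by
  have hlin : HasDerivAt (fun t : ℝ => (t : ℂ) * I) I θ := by
    simpa using (Complex.ofRealCLM.hasDerivAt.mul_const I)
  have hexp : HasDerivAt (fun t : ℝ => Complex.exp (t * I)) (I * Complex.exp (θ * I)) θ := by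
    have := (Complex.hasDerivAt_exp ((θ : ℂ) * I)).scomp θ hlin
    simpa [Function.comp_def, smul_eq_mul, mul_comm] using this
  have harg : ∀ j : Fin n, HasDerivAt
      (fun t : ℝ => (1 - (starRingEnd ℂ) (a j) * Complex.exp (t * I)).arg)
      (((-((starRingEnd ℂ) (a j) * (I * Complex.exp (θ * I)))) *
        (1 - (starRingEnd ℂ) (a j) * Complex.exp (θ * I))⁻¹).im) θ := by
    intro j
    have hw : HasDerivAt (fun t : ℝ => 1 - (starRingEnd ℂ) (a j) * Complex.exp (t * I))
        (-((starRingEnd ℂ) (a j) * (I * Complex.exp (θ * I)))) θ :=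
      (hexp.const_mul ((starRingEnd ℂ) (a j))).const_sub 1
    have hlog : HasDerivAt
        (fun t : ℝ => Complex.log (1 - (starRingEnd ℂ) (a j) * Complex.exp (t * I)))
        ((-((starRingEnd ℂ) (a j) * (I * Complex.exp (θ * I)))) *
          (1 - (starRingEnd ℂ) (a j) * Complex.exp (θ * I))⁻¹) θ := by
      have := (Complex.hasDerivAt_log (w_slit (ha j) θ)).scomp θ hw
      simpa [Function.comp_def, smul_eq_mul] using this
    have him := Complex.imCLM.hasFDerivAt.comp_hasDerivAt θ hlog
    simpa only [Function.comp_def, Complex.imCLM_apply, Complex.log_im] using him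
  have hsum : HasDerivAt
      (fun t : ℝ => ∑ j, (1 - (starRingEnd ℂ) (a j) * Complex.exp (t * I)).arg)
      (∑ j, ((-((starRingEnd ℂ) (a j) * (I * Complex.exp (θ * I)))) *
        (1 - (starRingEnd ℂ) (a j) * Complex.exp (θ * I))⁻¹).im) θ :=
    HasDerivAt.fun_sum fun j _ => harg j
  have hlin2 : HasDerivAt (fun t : ℝ => Complex.arg lam + (n : ℝ) * t) ((n : ℝ)) θ := by
    simpa using ((hasDerivAt_id θ).const_mul (n : ℝ)).const_add lam.arg
  have h2 := hlin2.sub (hsum.const_mul 2)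
  unfold psi
  exact h2


lemma psi_strictMono {n : ℕ} (hn : 1 ≤ n) (lam : ℂ) {a : Fin n → ℂ}
    (ha : ∀ j, ‖a j‖ < 1) : StrictMono (psi lam a) := by
  apply strictMono_of_deriv_pos
  intro θ
  rw [(hasDerivAt_psi lam ha θ).deriv]
  have hlt : ∀ j : Fin n, ((-((starRingEnd ℂ) (a j) * (I * Complex.exp (θ * I)))) *
      (1 - (starRingEnd ℂ) (a j) * Complex.exp (θ * I))⁻¹).im < 1 / 2 := by
    intro j
    apply im_lt_half
    have h1 := u_lt (ha j) θ
    rw [← Complex.sq_norm]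
    nlinarith [norm_nonneg ((starRingEnd ℂ) (a j) * Complex.exp (θ * I))]
  have hne : (Finset.univ : Finset (Fin n)).Nonempty := ⟨⟨0, hn⟩, Finset.mem_univ _⟩
  have hsum := Finset.sum_lt_sum_of_nonempty hne (fun j _ => hlt j)
  rw [Finset.sum_const, Finset.card_univ, Fintype.card_fin, nsmul_eq_mul] at hsum
  have : (n : ℝ) * (1/2) = n/2 := by ring
  rw [this] at hsum
  linarith

lemma psi_continuous {n : ℕ} (lam : ℂ) {a : Fin n → ℂ}
    (ha : ∀ j, ‖a j‖ < 1) : Continuous (psi lam a) := by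
  have : Differentiable ℝ (psi lam a) := fun θ => (hasDerivAt_psi lam ha θ).differentiableAt
  exact this.continuous

lemma exp_shift (θ : ℝ) (q : ℤ) :
    Complex.exp ((↑(θ + 2 * π * q) : ℂ) * I) = Complex.exp ((θ : ℂ) * I) := by
  have h : ((θ + 2 * π * q : ℝ) : ℂ) * I = (θ : ℂ) * I + q * (2 * π * I) := by
    push_cast; ring
  rw [h, Complex.exp_add, Complex.exp_int_mul_two_pi_mul_I, mul_one]

lemma psi_shift {n : ℕ} (lam : ℂ) (a : Fin n → ℂ) (θ : ℝ) (q : ℤ) :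
    psi lam a (θ + 2 * π * q) = psi lam a θ + n * (2 * π * q) := by
  unfold psi
  rw [exp_shift θ q]
  push_cast
  ring

lemma psi_surj {n : ℕ} (hn : 1 ≤ n) (lam : ℂ) {a : Fin n → ℂ}
    (ha : ∀ j, ‖a j‖ < 1) : Function.Surjective (psi lam a) := by
  intro c
  have hπ : 0 < 2 * π * n := by
    have := Real.pi_pos
    have : (0:ℝ) < n := by exact_mod_cast hn
    positivity
  set t : ℝ := c - psi lam a 0 with ht
  set k : ℤ := ⌊t / (2 * π * n)⌋ with hk
  have hk1 : (k : ℝ) * (2 * π * n) ≤ t := (le_div_iff₀ hπ).1 (Int.floor_le _)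
  have hk2 : t < ((k : ℝ) + 1) * (2 * π * n) := (div_lt_iff₀ hπ).1 (Int.lt_floor_add_one _)
  have h1 : psi lam a (2 * π * k) = psi lam a 0 + n * (2 * π * k) := by
    simpa using psi_shift lam a 0 k
  have h2 : psi lam a (2 * π * (k + 1)) = psi lam a 0 + n * (2 * π * (k + 1)) := by
    have := psi_shift lam a 0 (k + 1)
    push_cast at this ⊢
    simpa using this
  have hle : 2 * π * (k : ℝ) ≤ 2 * π * ((k : ℝ) + 1) := by nlinarith [Real.pi_pos]
  have hmem : c ∈ Set.Icc (psi lam a (2 * π * k)) (psi lam a (2 * π * (k + 1))) := by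
    constructor
    · rw [h1]; nlinarith
    · rw [h2]; push_cast; nlinarith
  obtain ⟨θ, _, hθ⟩ := intermediate_value_Icc hle (psi_continuous lam ha).continuousOn hmem
  exact ⟨θ, hθ⟩


lemma sin_nonneg_iff_exists (x : ℝ) :
    0 ≤ Real.sin x ↔ ∃ k : ℤ, x ∈ Set.Icc (2 * π * k) (2 * π * k + π) := by
  have hπ : 0 < 2 * π := by have := Real.pi_pos; linarith
  constructor
  · intro h
    set k : ℤ := ⌊x / (2 * π)⌋ with hk
    have h1 : (k : ℝ) * (2 * π) ≤ x := (le_div_iff₀ hπ).1 (Int.floor_le _)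
    have h2 : x < ((k : ℝ) + 1) * (2 * π) := (div_lt_iff₀ hπ).1 (Int.lt_floor_add_one _)
    set r : ℝ := x - 2 * π * k with hr
    have hsr : Real.sin x = Real.sin r := by
      have := Real.sin_add_int_mul_two_pi r k
      rw [show r + (k : ℝ) * (2 * π) = x by rw [hr]; ring] at this
      exact this
    by_cases hrle : r ≤ π
    · exact ⟨k, by constructor <;> [linarith; linarith]⟩
    · exfalso
      push_neg at hrle
      have hrlt : r < 2 * π := by rw [hr]; nlinarith
      have hpos : 0 < Real.sin (r - π) :=
        Real.sin_pos_of_pos_of_lt_pi (by linarith) (by linarith)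
      have : Real.sin (r - π + π) = -Real.sin (r - π) := Real.sin_add_pi _
      rw [show r - π + π = r by ring] at this
      rw [hsr, this] at h
      linarith
  · rintro ⟨k, h1, h2⟩
    have key := Real.sin_add_int_mul_two_pi (x - 2 * π * k) k
    rw [show x - 2 * π * (k : ℝ) + (k : ℝ) * (2 * π) = x by ring] at key
    rw [key]
    exact Real.sin_nonneg_of_nonneg_of_le_pi (by linarith) (by linarith)


lemma exp_eq_iff (θ θ' : ℝ) :
    Complex.exp ((θ : ℂ) * I) = Complex.exp ((θ' : ℂ) * I) ↔ ∃ q : ℤ, θ = θ' + 2 * π * q := by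
  rw [Complex.exp_eq_exp_iff_exists_int]
  constructor
  · rintro ⟨q, hq⟩
    refine ⟨q, ?_⟩
    have h2 : ((θ : ℂ)) * I = ((θ' + 2 * π * q : ℝ) : ℂ) * I := by
      rw [hq]; push_cast; ring
    have h3 : (θ : ℂ) = ((θ' + 2 * π * q : ℝ) : ℂ) := mul_right_cancel₀ Complex.I_ne_zero h2
    exact_mod_cast h3
  · rintro ⟨q, hq⟩
    exact ⟨q, by rw [hq]; push_cast; ring⟩

end BlaschkeAux


open BlaschkeAux in
lemma blaschke_arcs {n : ℕ} {b : ℂ → ℂ} (h : IsBlaschke n b) :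
    IsDisjointUnionOfArcs n {z : ℂ | ‖z‖ = 1 ∧ 0 ≤ (b z).im} := by
  obtain ⟨lam, a, hlam, ha, hb⟩ := h
  rcases Nat.eq_zero_or_pos n with rfl | hn
  · left
    refine ⟨rfl, ?_⟩
    have hbz : ∀ z : ℂ, ‖z‖ = 1 → b z = lam := fun z hz => by
      rw [hb z (le_of_eq hz)]; simp
    by_cases him : 0 ≤ lam.im
    · right
      ext z
      simp only [Set.mem_setOf_eq, unitCircleSet]
      exact ⟨fun hz => hz.1, fun hz => ⟨hz, by rw [hbz z hz]; exact him⟩⟩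
    · left
      ext z
      simp only [Set.mem_setOf_eq, Set.mem_empty_iff_false, iff_false]
      rintro ⟨h1, h2⟩
      rw [hbz z h1] at h2
      exact him h2
  · right
    have hπ := Real.pi_pos
    set ψ := psi lam a with hψ
    have hmono := psi_strictMono hn lam ha
    have hsurj := psi_surj hn lam ha
    set e : ℝ ≃o ℝ := StrictMono.orderIsoOfSurjective ψ hmono hsurj with he
    have hcoe : ∀ x, e x = ψ x := fun x =>
      congrFun (StrictMono.coe_orderIsoOfSurjective ψ hmono hsurj) x
    have hsymm_shift : ∀ (y : ℝ) (q : ℤ), e.symm (y + n * (2 * π * q)) = e.symm y + 2 * π * q := by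
      intro y q
      apply e.injective
      rw [OrderIso.apply_symm_apply, hcoe, hψ, psi_shift lam a _ q, ← hψ, ← hcoe,
        OrderIso.apply_symm_apply]
    set σ : ℤ → ℝ := fun k => e.symm (2 * π * k) with hσ
    set τ : ℤ → ℝ := fun k => e.symm (2 * π * k + π) with hτ
    have hψσ : ∀ k, ψ (σ k) = 2 * π * k := fun k => by
      rw [← hcoe, hσ]; exact e.apply_symm_apply _
    have hψτ : ∀ k, ψ (τ k) = 2 * π * k + π := fun k => by
      rw [← hcoe, hτ]; exact e.apply_symm_apply _
    have hστ : ∀ k, σ k < τ k := fun k =>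
      e.symm.strictMono (by linarith)
    have hσmono : ∀ k k' : ℤ, k ≤ k' → σ k ≤ σ k' := fun k k' hk =>
      e.symm.monotone (by
        have : (k : ℝ) ≤ (k' : ℝ) := by exact_mod_cast hk
        nlinarith)
    have hτσ : ∀ k, τ k < σ (k + 1) := fun k =>
      e.symm.strictMono (by push_cast; linarith)
    have hσshift : ∀ (k q : ℤ), σ (k + n * q) = σ k + 2 * π * q := by
      intro k q
      have h1 : 2 * π * ((k + n * q : ℤ) : ℝ) = 2 * π * k + n * (2 * π * q) := by
        push_cast; ring
      rw [hσ]
      simp only []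
      rw [h1, hsymm_shift]
    have hτshift : ∀ (k q : ℤ), τ (k + n * q) = τ k + 2 * π * q := by
      intro k q
      have h1 : 2 * π * ((k + n * q : ℤ) : ℝ) + π = (2 * π * k + π) + n * (2 * π * q) := by
        push_cast; ring
      rw [hτ]
      simp only []
      rw [h1, hsymm_shift]
    -- the arcs
    set A : Fin n → Set ℂ :=
      fun j => (fun θ : ℝ => Complex.exp ((θ : ℂ) * I)) '' Set.Icc (σ j) (τ j) with hA
    have hcontexp : Continuous (fun θ : ℝ => Complex.exp ((θ : ℂ) * I)) := by
      continuity
    have hBz : ∀ θ : ℝ, b (Complex.exp ((θ : ℂ) * I)) = Complex.exp ((ψ θ : ℂ) * I) := by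
      intro θ
      rw [hb _ (le_of_eq (Complex.norm_exp_ofReal_mul_I θ))]
      exact prod_eq hlam ha θ
    have hIm : ∀ θ : ℝ, (b (Complex.exp ((θ : ℂ) * I))).im = Real.sin (ψ θ) := by
      intro θ
      rw [hBz θ]
      exact Complex.exp_ofReal_mul_I_im (ψ θ)
    -- each A j is an arc
    have harc : ∀ j, IsArc (A j) := by
      intro j
      refine ⟨?_, ?_, ?_, ?_, ?_⟩
      · rintro z ⟨θ, _, rfl⟩
        exact Complex.norm_exp_ofReal_mul_I θ
      · exact (isCompact_Icc.image hcontexp).isClosed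
      · exact (isConnected_Icc (le_of_lt (hστ _))).image _ hcontexp.continuousOn
      · -- proper
        intro heq
        set ρ : ℝ := (τ (j : ℤ) + (σ (j : ℤ) + 2 * π)) / 2 with hρ
        have hρmem : Complex.exp ((ρ : ℂ) * I) ∈ A j := by
          rw [heq]; exact Complex.norm_exp_ofReal_mul_I ρ
        obtain ⟨θ, hθmem, hθeq⟩ := hρmem
        obtain ⟨q, hq⟩ := (exp_eq_iff ρ θ).1 hθeq.symm
        have hτlt : τ (j : ℤ) < σ (j : ℤ) + 2 * π := by
          have h1 := hτσ (j : ℤ)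
          have h2 : σ ((j : ℤ) + 1) ≤ σ ((j : ℤ) + n * 1) :=
            hσmono _ _ (by omega)
          rw [hσshift] at h2
          push_cast at h2
          linarith
        have hb1 : θ < ρ := by
          rw [hρ]
          have := hθmem.2
          linarith
        have hb2 : ρ < θ + 2 * π := by
          rw [hρ]
          have := hθmem.1
          linarith
        have hq1 : (0 : ℝ) < 2 * π * q := by linarith [hq]
        have hq2 : 2 * π * (q : ℝ) < 2 * π := by linarith [hq]
        have hq3 : (0 : ℤ) < q := by
          by_contra hc
          push_neg at hc
          have : (q : ℝ) ≤ 0 := by exact_mod_cast hc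
          nlinarith
        have hq4 : (1 : ℤ) ≤ q := hq3
        have : (1 : ℝ) ≤ (q : ℝ) := by exact_mod_cast hq4
        nlinarith
      · exact ⟨_, Set.mem_image_of_mem _ (Set.left_mem_Icc.2 (le_of_lt (hστ _)))⟩
    -- disjointness
    have hdisj_lt : ∀ j j' : Fin n, (j : ℕ) < (j' : ℕ) → Disjoint (A j) (A j') := by
      intro j j' hjj
      rw [Set.disjoint_left]
      rintro z ⟨θ, hθ, rfl⟩ ⟨θ', hθ', hzeq⟩
      obtain ⟨q, hq⟩ := (exp_eq_iff θ θ').1 hzeq.symm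
      have hlt1 : θ < θ' := by
        have h1 : τ (j : ℤ) < σ ((j : ℤ) + 1) := hτσ _
        have h2 : σ ((j : ℤ) + 1) ≤ σ (j' : ℤ) := hσmono _ _ (by omega)
        have := hθ.2
        have := hθ'.1
        linarith
      have hlt2 : θ' < θ + 2 * π := by
        have h1 : τ (j' : ℤ) < σ ((j' : ℤ) + 1) := hτσ _
        have h2 : σ ((j' : ℤ) + 1) ≤ σ ((j : ℤ) + n * 1) := hσmono _ _ (by omega)
        rw [hσshift] at h2
        push_cast at h2
        have := hθ.1
        have := hθ'.2
        linarith
      have hq1 : 2 * π * (q : ℝ) < 0 := by linarith [hq]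
      have hq2 : -(2 * π) < 2 * π * (q : ℝ) := by linarith [hq]
      rcases lt_or_ge q 0 with hc | hc
      · have h1 : q ≤ -1 := by omega
        have h2 : (q : ℝ) ≤ -1 := by exact_mod_cast h1
        nlinarith
      · have h2 : (0 : ℝ) ≤ (q : ℝ) := by exact_mod_cast hc
        nlinarith
    refine ⟨A, harc, ?_, ?_⟩
    · intro j j' hne
      rcases lt_or_gt_of_ne (fun hc : (j : ℕ) = (j' : ℕ) => hne (Fin.ext hc)) with hlt | hgt
      · exact hdisj_lt j j' hlt
      · exact (hdisj_lt j' j hgt).symm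
    -- the set identity
    · ext z
      simp only [Set.mem_setOf_eq, Set.mem_iUnion]
      constructor
      · rintro ⟨hz1, hz2⟩
        have hz : z = Complex.exp ((z.arg : ℂ) * I) := by
          conv_lhs => rw [← Complex.norm_mul_exp_arg_mul_I z]
          rw [hz1, Complex.ofReal_one, one_mul]
        have him : 0 ≤ Real.sin (ψ z.arg) := by
          rw [← hIm]
          rw [← hz]
          exact hz2
        obtain ⟨k, hk1, hk2⟩ := (sin_nonneg_iff_exists _).1 him
        have hθk : z.arg ∈ Set.Icc (σ k) (τ k) := by
          constructor
          · have := e.symm.monotone hk1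
            rw [← hcoe z.arg, e.symm_apply_apply] at this
            exact this
          · have := e.symm.monotone hk2
            rw [← hcoe z.arg, e.symm_apply_apply] at this
            exact this
        -- reduce k modulo n
        set q : ℤ := k / (n : ℤ) with hqdef
        set r : ℤ := k % (n : ℤ) with hrdef
        have hnz : (n : ℤ) ≠ 0 := by exact_mod_cast Nat.pos_iff_ne_zero.1 hn
        have hr0 : 0 ≤ r := Int.emod_nonneg k hnz
        have hrn : r < n := Int.emod_lt_of_pos k (by exact_mod_cast hn)
        have hkeq : k = r + n * q := by rw [hrdef, hqdef]; exact (Int.emod_add_mul_ediv k n).symm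
        set j : Fin n := ⟨r.toNat, by omega⟩ with hj
        have hjr : ((j : ℕ) : ℤ) = r := by simp [hj]; omega
        have hσk : σ k = σ (j : ℤ) + 2 * π * q := by rw [hkeq, ← hjr, hσshift]
        have hτk : τ k = τ (j : ℤ) + 2 * π * q := by rw [hkeq, ← hjr, hτshift]
        refine ⟨j, z.arg - 2 * π * q, ?_, ?_⟩
        · constructor
          · rw [← sub_nonneg] at *
            have := hθk.1
            rw [hσk] at this
            linarith
          · have := hθk.2
            rw [hτk] at this
            linarith
        · have hexp := exp_shift (z.arg - 2 * π * q) q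
          rw [show z.arg - 2 * π * (q : ℝ) + 2 * π * (q : ℝ) = z.arg by ring] at hexp
          show Complex.exp ((↑(z.arg - 2 * π * (q : ℝ)) : ℂ) * I) = z
          rw [← hexp, ← hz]
      · rintro ⟨j, θ, hθ, rfl⟩
        refine ⟨Complex.norm_exp_ofReal_mul_I θ, ?_⟩
        rw [hIm θ]
        apply (sin_nonneg_iff_exists _).2
        refine ⟨(j : ℤ), ?_, ?_⟩
        · have h0 := e.monotone hθ.1
          rw [hcoe θ] at h0
          have h1 : e (σ ((j : ℕ) : ℤ)) = 2 * π * (((j : ℕ) : ℤ) : ℝ) := e.apply_symm_apply _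
          rw [h1] at h0
          push_cast at h0 ⊢
          linarith
        · have h0 := e.monotone hθ.2
          rw [hcoe θ] at h0
          have h1 : e (τ ((j : ℕ) : ℤ)) = 2 * π * (((j : ℕ) : ℤ) : ℝ) + π := e.apply_symm_apply _
          rw [h1] at h0
          push_cast at h0 ⊢
          linarith


/-- A finite Blaschke product `b` has order `n` if and only if
`U_b = {z ∈ 𝕋 : Im b(z) ≥ 0}` is a disjoint union of exactly `n` arcs. -/
theorem blaschke_order_iff_Ub (b : ℂ → ℂ) (hb : ∃ m, IsBlaschke m b) (n : ℕ) :
    IsBlaschke n b ↔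
      IsDisjointUnionOfArcs n {z : ℂ | ‖z‖ = 1 ∧ 0 ≤ (b z).im} := by
  obtain ⟨m, hm⟩ := hb
  constructor
  · exact fun h => blaschke_arcs h
  · intro h
    have hnm : n = m := arcs_count_unique h (blaschke_arcs hm)
    rw [hnm]
    exact hm
end
end
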